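/- Let α < 0, P > 0, and U ∈ ℂ^{N×G}. Define F* = (−1/α)·U if ‖U‖_F² ≤ α²·P, and F* = √P·U/‖U‖_F otherwise. Then ‖F*‖_F² ≤ P, and for every F ∈ ℂ^{N×G} with ‖F‖_F² ≤ P: 2·Re( Tr[Uᴴ F] ) + α·‖F‖_F² ≤ 2·Re( Tr[Uᴴ F*] ) + α·‖F*‖_F². That is, F* is a global maximizer of the concave quadratic 2·Re(Tr[Uᴴ F]) + α·Tr[Fᴴ F] over the Frobenius ball ‖F‖_F² ≤ P. -/

import Mathlib

open Matrix

/-- Squared Frobenius norm of a complex matrix. -/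
noncomputable def frobSq {m n : Type*} [Fintype m] [Fintype n] (X : Matrix m n ℂ) : ℝ :=
  ∑ i, ∑ j, ‖X i j‖ ^ 2

/-- Frobenius norm of a complex matrix. -/
noncomputable def frob {m n : Type*} [Fintype m] [Fintype n] (X : Matrix m n ℂ) : ℝ :=
  Real.sqrt (frobSq X)


section aux
variable {E : Type*} [NormedAddCommGroup E] [InnerProductSpace ℂ E]

lemma aux_key (α P : ℝ) (hα : α < 0) (hP : 0 < P) (u fs : E)
    (hfs : fs = if ‖u‖ ^ 2 ≤ α ^ 2 * P then ((-(1/α) : ℝ) : ℂ) • u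
        else (((Real.sqrt P / ‖u‖ : ℝ)) : ℂ) • u) :
    ‖fs‖ ^ 2 ≤ P ∧ ∀ f : E, ‖f‖ ^ 2 ≤ P →
      2 * (inner ℂ u f).re + α * ‖f‖ ^ 2 ≤
        2 * (inner ℂ u fs).re + α * ‖fs‖ ^ 2 := by
  have hαne : α ≠ 0 := ne_of_lt hα
  have hα2 : (0:ℝ) < α ^ 2 := by nlinarith
  have expand : ∀ f : E, ‖u + (α : ℂ) • f‖ ^ 2
      = ‖u‖ ^ 2 + 2 * (α * (inner ℂ u f).re) + α ^ 2 * ‖f‖ ^ 2 := by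
    intro f
    rw [@norm_add_sq ℂ]
    rw [inner_smul_right]
    simp [norm_smul, Complex.re_ofReal_mul, mul_pow, Complex.sq_norm, Complex.normSq_ofReal]
  have hsmul_norm : ∀ (r : ℝ), ‖((r : ℂ)) • u‖ ^ 2 = r ^ 2 * ‖u‖ ^ 2 := by
    intro r
    rw [norm_smul]
    simp [mul_pow, Complex.sq_norm, Complex.normSq_ofReal]
  have hsmul_inner : ∀ (r : ℝ), (inner ℂ u (((r : ℂ)) • u)).re = r * ‖u‖ ^ 2 := by
    intro r
    rw [inner_smul_right, inner_self_eq_norm_sq_to_K]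
    simp [Complex.re_ofReal_mul, ← Complex.ofReal_pow]
  by_cases h : ‖u‖ ^ 2 ≤ α ^ 2 * P
  · rw [hfs, if_pos h]
    have hinv : (0:ℝ) ≤ -(1/α) := by
      have : 1/α < 0 := one_div_neg.mpr hα
      linarith
    constructor
    · rw [hsmul_norm]
      have e : (-(1/α)) ^ 2 * α ^ 2 = 1 := by field_simp
      nlinarith [mul_le_mul_of_nonneg_left h (sq_nonneg (-(1/α)))]
    · intro f hf
      rw [hsmul_norm, hsmul_inner]
      have h0 : 0 ≤ ‖u + (α : ℂ) • f‖ ^ 2 := sq_nonneg _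
      rw [expand f] at h0
      have e1 : 2 * (-(1/α) * ‖u‖ ^ 2) + α * ((-(1/α)) ^ 2 * ‖u‖ ^ 2)
          = -(1/α) * ‖u‖^2 := by field_simp; ring
      rw [e1, ← sub_nonneg]
      have e2 : -(1/α) * ‖u‖^2 - (2 * (inner ℂ u f).re + α * ‖f‖ ^ 2)
          = (-(1/α)) * (‖u‖ ^ 2 + 2 * (α * (inner ℂ u f).re) + α ^ 2 * ‖f‖ ^ 2) := by
        field_simp
        ring
      rw [e2]
      exact mul_nonneg hinv h0
  · rw [hfs, if_neg h]
    push_neg at h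
    have hupos : 0 < ‖u‖ := by
      rcases (norm_nonneg u).lt_or_eq with h' | h'
      · exact h'
      · exfalso; nlinarith
    set s := Real.sqrt P with hs
    have hs2 : s ^ 2 = P := Real.sq_sqrt hP.le
    have hspos : 0 < s := Real.sqrt_pos.mpr hP
    have hnual : -α * s < ‖u‖ := by nlinarith [neg_pos.mpr hα]
    have e3 : (s / ‖u‖) ^ 2 * ‖u‖ ^ 2 = s ^ 2 := by field_simp
    constructor
    · rw [hsmul_norm, e3, hs2]
    · intro f hf
      rw [hsmul_norm, hsmul_inner, e3, hs2]
      have e2 : s / ‖u‖ * ‖u‖ ^ 2 = s * ‖u‖ := by field_simp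
      rw [e2]
      have hcs : (inner ℂ u f).re ≤ ‖u‖ * ‖f‖ := by
        have h' := norm_inner_le_norm (𝕜 := ℂ) u f
        exact le_trans (Complex.re_le_norm _) h'
      have hft : ‖f‖ ≤ s := by nlinarith [norm_nonneg f]
      have hpos : 0 ≤ 2*‖u‖ + α*(s+‖f‖) := by nlinarith [norm_nonneg f]
      have hprod : 0 ≤ (s - ‖f‖) * (2*‖u‖ + α*(s+‖f‖)) := mul_nonneg (by linarith) hpos
      nlinarith [hprod, hcs, hs2, norm_nonneg f]
end aux

/-- vectorization of a matrix into Euclidean space -/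
noncomputable def vecM {N G : ℕ} (X : Matrix (Fin N) (Fin G) ℂ) :
    EuclideanSpace ℂ (Fin N × Fin G) := WithLp.toLp 2 (fun p : Fin N × Fin G => X p.1 p.2)

lemma frobSq_eq_norm_sq {N G : ℕ} (X : Matrix (Fin N) (Fin G) ℂ) :
    frobSq X = ‖vecM X‖ ^ 2 := by
  rw [EuclideanSpace.norm_eq, Real.sq_sqrt (by positivity), frobSq, Fintype.sum_prod_type]
  simp [vecM]

lemma frob_eq_norm {N G : ℕ} (X : Matrix (Fin N) (Fin G) ℂ) :
    frob X = ‖vecM X‖ := by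
  rw [frob, frobSq_eq_norm_sq, Real.sqrt_sq (norm_nonneg _)]

lemma trace_eq_inner {N G : ℕ} (U F : Matrix (Fin N) (Fin G) ℂ) :
    Matrix.trace (U.conjTranspose * F) = (inner ℂ (vecM U) (vecM F)) := by
  rw [Matrix.trace, PiLp.inner_apply, Fintype.sum_prod_type]
  simp only [Matrix.diag_apply, Matrix.mul_apply, Matrix.conjTranspose_apply, vecM,
    RCLike.inner_apply]
  rw [Finset.sum_comm]
  exact Finset.sum_congr rfl fun _ _ => Finset.sum_congr rfl fun _ _ => mul_comm _ _

lemma vecM_smul {N G : ℕ} (r : ℝ) (X : Matrix (Fin N) (Fin G) ℂ) :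
    vecM (r • X) = ((r : ℂ)) • vecM X := by
  ext p
  simp [vecM, Complex.real_smul]

/-- eqs. (30)–(32) of the paper: closed-form solution of the precoder
subproblem. For `α < 0`, `P > 0`, `F* = (−1/α)U` if `‖U‖_F² ≤ α²P` and
`F* = √P·U/‖U‖_F` otherwise, `F*` is feasible and globally maximizes
`2·Re(Tr[Uᴴ F]) + α‖F‖_F²` over the Frobenius ball `‖F‖_F² ≤ P`. -/
theorem stmt12 (N G : ℕ) (α P : ℝ) (hα : α < 0) (hP : 0 < P)
    (U : Matrix (Fin N) (Fin G) ℂ)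
    (Fstar : Matrix (Fin N) (Fin G) ℂ)
    (hFstar : Fstar = if frobSq U ≤ α ^ 2 * P then (-(1 / α)) • U
        else (Real.sqrt P / frob U) • U) :
    frobSq Fstar ≤ P ∧
    ∀ F : Matrix (Fin N) (Fin G) ℂ, frobSq F ≤ P →
      2 * (Matrix.trace (U.conjTranspose * F)).re + α * frobSq F ≤
        2 * (Matrix.trace (U.conjTranspose * Fstar)).re + α * frobSq Fstar := by
  have hkey := aux_key α P hα hP (vecM U) (vecM Fstar) ?_
  · obtain ⟨h1, h2⟩ := hkey
    constructor
    · rw [frobSq_eq_norm_sq]; exact h1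
    · intro F hF
      rw [frobSq_eq_norm_sq] at hF
      rw [frobSq_eq_norm_sq F, frobSq_eq_norm_sq Fstar, trace_eq_inner, trace_eq_inner]
      exact h2 (vecM F) hF
  · rw [hFstar]
    by_cases h : frobSq U ≤ α ^ 2 * P
    · rw [if_pos h, if_pos (by rwa [← frobSq_eq_norm_sq]), vecM_smul]
    · rw [if_neg h, if_neg (by rwa [← frobSq_eq_norm_sq]), vecM_smul, frob_eq_norm]
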